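/- Define the surrogate t̂(θ,c,v) = t₀ - f(c + t₀v; θ) / ⟨∇ₓf(x₀;θ₀), v₀⟩. Then t̂(θ₀,c₀,v₀) = t₀, and the partial derivatives of t̂ with respect to θ, c, and v at (θ₀,c₀,v₀) agree with those of the implicitly defined intersection parameter t. -/

import Mathlib

open scoped RealInnerProductSpace

set_option maxHeartbeats 1000000

noncomputable section

/-- Lemma 1 (sample network surrogate, scalar form): the surrogate
`t̂(θ,c,v) = t₀ - f(c + t₀ v; θ) / ⟨∇ₓf(x₀;θ₀), v₀⟩` agrees with the implicitly
defined intersection parameter `t` in value and in all first partial derivatives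
at `(θ₀, c₀, v₀)`. -/
theorem sample_network_scalar {m : ℕ}
    (f : EuclideanSpace ℝ (Fin 3) → EuclideanSpace ℝ (Fin m) → ℝ)
    (t : EuclideanSpace ℝ (Fin m) → EuclideanSpace ℝ (Fin 3) → EuclideanSpace ℝ (Fin 3) → ℝ)
    (θ₀ : EuclideanSpace ℝ (Fin m)) (c₀ v₀ : EuclideanSpace ℝ (Fin 3))
    (hf : ContDiff ℝ 1 (fun p : EuclideanSpace ℝ (Fin 3) × EuclideanSpace ℝ (Fin m) => f p.1 p.2))
    (ht : ∀ᶠ p : EuclideanSpace ℝ (Fin m) × EuclideanSpace ℝ (Fin 3) × EuclideanSpace ℝ (Fin 3)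
        in nhds (θ₀, c₀, v₀), f (p.2.1 + t p.1 p.2.1 p.2.2 • p.2.2) p.1 = 0)
    (ht' : DifferentiableAt ℝ
      (fun p : EuclideanSpace ℝ (Fin m) × EuclideanSpace ℝ (Fin 3) × EuclideanSpace ℝ (Fin 3) =>
        t p.1 p.2.1 p.2.2) (θ₀, c₀, v₀))
    (t₀ : ℝ) (ht₀ : t₀ = t θ₀ c₀ v₀)
    (x₀ : EuclideanSpace ℝ (Fin 3)) (hx₀ : x₀ = c₀ + t₀ • v₀)
    (g : EuclideanSpace ℝ (Fin 3)) (hgdef : g = gradient (fun x => f x θ₀) x₀)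
    (hg : ⟪g, v₀⟫ ≠ 0)
    (that : EuclideanSpace ℝ (Fin m) → EuclideanSpace ℝ (Fin 3) → EuclideanSpace ℝ (Fin 3) → ℝ)
    (hthat : ∀ θ c v, that θ c v = t₀ - f (c + t₀ • v) θ / ⟪g, v₀⟫) :
    that θ₀ c₀ v₀ = t₀ ∧
    fderiv ℝ (fun θ => that θ c₀ v₀) θ₀ = fderiv ℝ (fun θ => t θ c₀ v₀) θ₀ ∧
    fderiv ℝ (fun c => that θ₀ c v₀) c₀ = fderiv ℝ (fun c => t θ₀ c v₀) c₀ ∧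
    fderiv ℝ (fun v => that θ₀ c₀ v) v₀ = fderiv ℝ (fun v => t θ₀ c₀ v) v₀ := by
  classical
  set d : ℝ := ⟪g, v₀⟫ with hd
  set F : EuclideanSpace ℝ (Fin 3) × EuclideanSpace ℝ (Fin m) → ℝ := fun p => f p.1 p.2 with hF
  have hFdiff : DifferentiableAt ℝ F (x₀, θ₀) := (hf.differentiable one_ne_zero).differentiableAt
  set Df : EuclideanSpace ℝ (Fin 3) × EuclideanSpace ℝ (Fin m) →L[ℝ] ℝ := fderiv ℝ F (x₀, θ₀) with hDfdef
  have hDf : HasFDerivAt F Df (x₀, θ₀) := hFdiff.hasFDerivAt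
  -- the slice x ↦ f x θ₀ at x₀
  have hemb : HasFDerivAt (fun x : EuclideanSpace ℝ (Fin 3) => (x, θ₀))
      ((ContinuousLinearMap.id ℝ (EuclideanSpace ℝ (Fin 3))).prod (0 : EuclideanSpace ℝ (Fin 3) →L[ℝ] EuclideanSpace ℝ (Fin m))) x₀ :=
    (hasFDerivAt_id x₀).prodMk (hasFDerivAt_const θ₀ x₀)
  have hslice : HasFDerivAt (fun x : EuclideanSpace ℝ (Fin 3) => f x θ₀)
      (Df.comp ((ContinuousLinearMap.id ℝ (EuclideanSpace ℝ (Fin 3))).prod (0 : EuclideanSpace ℝ (Fin 3) →L[ℝ] EuclideanSpace ℝ (Fin m)))) x₀ := by have h := hDf.comp x₀ hemb; exact h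
  have hginner : ∀ w : EuclideanSpace ℝ (Fin 3), ⟪g, w⟫ = Df (w, 0) := by
    intro w
    have hge : g = (InnerProductSpace.toDual ℝ (EuclideanSpace ℝ (Fin 3))).symm (fderiv ℝ (fun x : EuclideanSpace ℝ (Fin 3) => f x θ₀) x₀) :=
      hgdef
    rw [hge, InnerProductSpace.toDual_symm_apply, hslice.fderiv]
    simp
  have hdval : d = Df (v₀, 0) := hginner v₀
  have hsplit : ∀ (a : EuclideanSpace ℝ (Fin 3)) (b : EuclideanSpace ℝ (Fin m)), Df (a, b) = Df (a, 0) + Df (0, b) := by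
    intro a b
    rw [← map_add]
    congr 1
    simp
  have hsmul : ∀ (s : ℝ) (w : EuclideanSpace ℝ (Fin 3)), Df (s • w, 0) = s * Df (w, 0) := by
    intro s w
    have : ((s • w, (0 : EuclideanSpace ℝ (Fin m))) : EuclideanSpace ℝ (Fin 3) × EuclideanSpace ℝ (Fin m)) = s • ((w, 0) : EuclideanSpace ℝ (Fin 3) × EuclideanSpace ℝ (Fin m)) := by
      simp [Prod.smul_mk]
    rw [this, map_smul, smul_eq_mul]
  -- the implicit point
  have hpt : x₀ = c₀ + t θ₀ c₀ v₀ • v₀ := by rw [hx₀, ht₀]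
  have hfx₀ : f x₀ θ₀ = 0 := by
    have := ht.self_of_nhds
    simpa [hpt] using this
  -- value equality
  have hval : that θ₀ c₀ v₀ = t₀ := by
    rw [hthat, ← hx₀, hfx₀]
    simp
  refine ⟨hval, ?_, ?_, ?_⟩
  -- ===== partial in θ =====
  · have hdiffθ : DifferentiableAt ℝ (fun θ : EuclideanSpace ℝ (Fin m) => t θ c₀ v₀) θ₀ := by
      have he : DifferentiableAt ℝ (fun θ : EuclideanSpace ℝ (Fin m) => (θ, (c₀, v₀))) θ₀ :=
        differentiableAt_id.prodMk (differentiableAt_const _)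
      exact ht'.comp θ₀ he
    set Tθ : EuclideanSpace ℝ (Fin m) →L[ℝ] ℝ := fderiv ℝ (fun θ : EuclideanSpace ℝ (Fin m) => t θ c₀ v₀) θ₀ with hTθdef
    have hTθ : HasFDerivAt (fun θ : EuclideanSpace ℝ (Fin m) => t θ c₀ v₀) Tθ θ₀ := hdiffθ.hasFDerivAt
    have hr : HasFDerivAt (fun θ : EuclideanSpace ℝ (Fin m) => ((c₀ + t θ c₀ v₀ • v₀ : EuclideanSpace ℝ (Fin 3)), θ))
        ((Tθ.smulRight v₀).prod (ContinuousLinearMap.id ℝ (EuclideanSpace ℝ (Fin m)))) θ₀ := by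
      refine HasFDerivAt.prodMk ?_ (hasFDerivAt_id θ₀)
      exact (hTθ.smul_const v₀).const_add c₀
    have hφ : HasFDerivAt (fun θ : EuclideanSpace ℝ (Fin m) => f (c₀ + t θ c₀ v₀ • v₀) θ)
        (Df.comp ((Tθ.smulRight v₀).prod (ContinuousLinearMap.id ℝ (EuclideanSpace ℝ (Fin m))))) θ₀ := by
      have hDf' : HasFDerivAt F Df ((c₀ + t θ₀ c₀ v₀ • v₀ : EuclideanSpace ℝ (Fin 3)), θ₀) := by rw [← hpt]; exact hDf
      have h : HasFDerivAt (F ∘ (fun θ : EuclideanSpace ℝ (Fin m) => ((c₀ + t θ c₀ v₀ • v₀ : EuclideanSpace ℝ (Fin 3)), θ)))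
          (Df.comp ((Tθ.smulRight v₀).prod (ContinuousLinearMap.id ℝ (EuclideanSpace ℝ (Fin m))))) θ₀ :=
        HasFDerivAt.comp (f := fun θ : EuclideanSpace ℝ (Fin m) => ((c₀ + t θ c₀ v₀ • v₀ : EuclideanSpace ℝ (Fin 3)), θ)) θ₀ hDf' hr
      exact h
    have hev : ∀ᶠ θ in nhds θ₀, f (c₀ + t θ c₀ v₀ • v₀) θ = 0 := by
      have hc : Filter.Tendsto (fun θ : EuclideanSpace ℝ (Fin m) => (θ, (c₀, v₀))) (nhds θ₀) (nhds (θ₀, c₀, v₀)) :=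
        (continuous_id.prodMk continuous_const).continuousAt
      exact hc.eventually ht
    have hφ0 : Df.comp ((Tθ.smulRight v₀).prod (ContinuousLinearMap.id ℝ (EuclideanSpace ℝ (Fin m)))) = 0 := by
      have h1 : (fun θ : EuclideanSpace ℝ (Fin m) => f (c₀ + t θ c₀ v₀ • v₀) θ) =ᶠ[nhds θ₀] fun _ => (0 : ℝ) := hev
      have h2 : fderiv ℝ (fun θ : EuclideanSpace ℝ (Fin m) => f (c₀ + t θ c₀ v₀ • v₀) θ) θ₀
          = fderiv ℝ (fun _ : EuclideanSpace ℝ (Fin m) => (0 : ℝ)) θ₀ := h1.fderiv_eq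
      rw [hφ.fderiv, fderiv_fun_const] at h2
      simpa using h2
    have key : ∀ dθ : EuclideanSpace ℝ (Fin m), Tθ dθ * d + Df (0, dθ) = 0 := by
      intro dθ
      have := congrFun (congrArg DFunLike.coe hφ0) dθ
      simp only [ContinuousLinearMap.comp_apply, ContinuousLinearMap.prod_apply,
        ContinuousLinearMap.smulRight_apply, ContinuousLinearMap.id_apply,
        ContinuousLinearMap.zero_apply] at this
      rw [hsplit, hsmul] at this
      rw [hdval]
      linarith
    -- derivative of the surrogate in θ
    have hD2 : HasFDerivAt (fun θ : EuclideanSpace ℝ (Fin m) => f x₀ θ)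
        (Df.comp ((0 : EuclideanSpace ℝ (Fin m) →L[ℝ] EuclideanSpace ℝ (Fin 3)).prod (ContinuousLinearMap.id ℝ (EuclideanSpace ℝ (Fin m))))) θ₀ :=
      hDf.comp θ₀ ((hasFDerivAt_const x₀ θ₀).prodMk (hasFDerivAt_id θ₀))
    have hthatθ : HasFDerivAt (fun θ : EuclideanSpace ℝ (Fin m) => that θ c₀ v₀)
        (-(d⁻¹ • (Df.comp ((0 : EuclideanSpace ℝ (Fin m) →L[ℝ] EuclideanSpace ℝ (Fin 3)).prod (ContinuousLinearMap.id ℝ (EuclideanSpace ℝ (Fin m))))))) θ₀ := by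
      have heq : (fun θ : EuclideanSpace ℝ (Fin m) => that θ c₀ v₀)
          = fun θ : EuclideanSpace ℝ (Fin m) => t₀ - d⁻¹ * f x₀ θ := by
        funext θ
        rw [hthat, ← hx₀, div_eq_inv_mul]
      rw [heq]
      exact (hD2.const_mul d⁻¹).const_sub t₀
    rw [hthatθ.fderiv]
    ext dθ
    have hk := key dθ
    have hval2 : Df (0, dθ) = (Df.comp ((0 : EuclideanSpace ℝ (Fin m) →L[ℝ] EuclideanSpace ℝ (Fin 3)).prod (ContinuousLinearMap.id ℝ (EuclideanSpace ℝ (Fin m))))) dθ := by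
      simp
    simp only [ContinuousLinearMap.neg_apply, ContinuousLinearMap.smul_apply, smul_eq_mul]
    rw [← hval2]
    show -(d⁻¹ * Df (0, dθ)) = Tθ dθ
    field_simp
    linarith
  -- ===== partial in c =====
  · have hdiffc : DifferentiableAt ℝ (fun c : EuclideanSpace ℝ (Fin 3) => t θ₀ c v₀) c₀ := by
      have he : DifferentiableAt ℝ (fun c : EuclideanSpace ℝ (Fin 3) => ((θ₀ : EuclideanSpace ℝ (Fin m)), (c, v₀))) c₀ :=
        (differentiableAt_const _).prodMk (differentiableAt_id.prodMk (differentiableAt_const _))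
      exact ht'.comp c₀ he
    set Tc : EuclideanSpace ℝ (Fin 3) →L[ℝ] ℝ := fderiv ℝ (fun c : EuclideanSpace ℝ (Fin 3) => t θ₀ c v₀) c₀ with hTcdef
    have hTc : HasFDerivAt (fun c : EuclideanSpace ℝ (Fin 3) => t θ₀ c v₀) Tc c₀ := hdiffc.hasFDerivAt
    have hr : HasFDerivAt (fun c : EuclideanSpace ℝ (Fin 3) => ((c + t θ₀ c v₀ • v₀ : EuclideanSpace ℝ (Fin 3)), (θ₀ : EuclideanSpace ℝ (Fin m))))
        ((ContinuousLinearMap.id ℝ (EuclideanSpace ℝ (Fin 3)) + Tc.smulRight v₀).prod (0 : EuclideanSpace ℝ (Fin 3) →L[ℝ] EuclideanSpace ℝ (Fin m))) c₀ := by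
      refine HasFDerivAt.prodMk ?_ (hasFDerivAt_const θ₀ c₀)
      exact (hasFDerivAt_id c₀).add (hTc.smul_const v₀)
    have hφ : HasFDerivAt (fun c : EuclideanSpace ℝ (Fin 3) => f (c + t θ₀ c v₀ • v₀) θ₀)
        (Df.comp ((ContinuousLinearMap.id ℝ (EuclideanSpace ℝ (Fin 3)) + Tc.smulRight v₀).prod (0 : EuclideanSpace ℝ (Fin 3) →L[ℝ] EuclideanSpace ℝ (Fin m)))) c₀ := by
      have hDf' : HasFDerivAt F Df ((c₀ + t θ₀ c₀ v₀ • v₀ : EuclideanSpace ℝ (Fin 3)), θ₀) := by rw [← hpt]; exact hDf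
      have h : HasFDerivAt (F ∘ (fun c : EuclideanSpace ℝ (Fin 3) => ((c + t θ₀ c v₀ • v₀ : EuclideanSpace ℝ (Fin 3)), θ₀)))
          (Df.comp ((ContinuousLinearMap.id ℝ (EuclideanSpace ℝ (Fin 3)) + Tc.smulRight v₀).prod (0 : EuclideanSpace ℝ (Fin 3) →L[ℝ] EuclideanSpace ℝ (Fin m)))) c₀ :=
        hDf'.comp c₀ hr
      exact h
    have hev : ∀ᶠ c in nhds c₀, f (c + t θ₀ c v₀ • v₀) θ₀ = 0 := by
      have hc : Filter.Tendsto (fun c : EuclideanSpace ℝ (Fin 3) => ((θ₀ : EuclideanSpace ℝ (Fin m)), (c, v₀))) (nhds c₀) (nhds (θ₀, c₀, v₀)) :=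
        (continuous_const.prodMk (continuous_id.prodMk continuous_const)).continuousAt
      exact hc.eventually ht
    have hφ0 : Df.comp ((ContinuousLinearMap.id ℝ (EuclideanSpace ℝ (Fin 3)) + Tc.smulRight v₀).prod (0 : EuclideanSpace ℝ (Fin 3) →L[ℝ] EuclideanSpace ℝ (Fin m))) = 0 := by
      have h1 : (fun c : EuclideanSpace ℝ (Fin 3) => f (c + t θ₀ c v₀ • v₀) θ₀) =ᶠ[nhds c₀] fun _ => (0 : ℝ) := hev
      have h2 : fderiv ℝ (fun c : EuclideanSpace ℝ (Fin 3) => f (c + t θ₀ c v₀ • v₀) θ₀) c₀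
          = fderiv ℝ (fun _ : EuclideanSpace ℝ (Fin 3) => (0 : ℝ)) c₀ := h1.fderiv_eq
      rw [hφ.fderiv, fderiv_fun_const] at h2
      simpa using h2
    have key : ∀ dc : EuclideanSpace ℝ (Fin 3), Df (dc, 0) + Tc dc * d = 0 := by
      intro dc
      have := congrFun (congrArg DFunLike.coe hφ0) dc
      simp only [ContinuousLinearMap.comp_apply, ContinuousLinearMap.prod_apply,
        ContinuousLinearMap.smulRight_apply, ContinuousLinearMap.id_apply,
        ContinuousLinearMap.add_apply, ContinuousLinearMap.zero_apply] at this
      rw [show (dc + Tc dc • v₀, (0 : EuclideanSpace ℝ (Fin m))) = ((dc, (0:EuclideanSpace ℝ (Fin m))) : EuclideanSpace ℝ (Fin 3) × EuclideanSpace ℝ (Fin m)) + (Tc dc • v₀, (0:EuclideanSpace ℝ (Fin m))) by simp,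
        map_add, hsmul] at this
      rw [hdval]
      linarith
    have hD2 : HasFDerivAt (fun c : EuclideanSpace ℝ (Fin 3) => f (c + t₀ • v₀) θ₀)
        (Df.comp ((ContinuousLinearMap.id ℝ (EuclideanSpace ℝ (Fin 3))).prod (0 : EuclideanSpace ℝ (Fin 3) →L[ℝ] EuclideanSpace ℝ (Fin m)))) c₀ := by
      have hr2 : HasFDerivAt (fun c : EuclideanSpace ℝ (Fin 3) => ((c + t₀ • v₀ : EuclideanSpace ℝ (Fin 3)), (θ₀ : EuclideanSpace ℝ (Fin m))))
          ((ContinuousLinearMap.id ℝ (EuclideanSpace ℝ (Fin 3))).prod (0 : EuclideanSpace ℝ (Fin 3) →L[ℝ] EuclideanSpace ℝ (Fin m))) c₀ := by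
        refine HasFDerivAt.prodMk ?_ (hasFDerivAt_const θ₀ c₀)
        exact (hasFDerivAt_id c₀).add_const (t₀ • v₀)
      have hDf' : HasFDerivAt F Df ((c₀ + t₀ • v₀ : EuclideanSpace ℝ (Fin 3)), θ₀) := by rw [← hx₀]; exact hDf
      have h : HasFDerivAt (F ∘ (fun c : EuclideanSpace ℝ (Fin 3) => ((c + t₀ • v₀ : EuclideanSpace ℝ (Fin 3)), θ₀)))
          (Df.comp ((ContinuousLinearMap.id ℝ (EuclideanSpace ℝ (Fin 3))).prod (0 : EuclideanSpace ℝ (Fin 3) →L[ℝ] EuclideanSpace ℝ (Fin m)))) c₀ :=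
        hDf'.comp c₀ hr2
      exact h
    have hthatc : HasFDerivAt (fun c : EuclideanSpace ℝ (Fin 3) => that θ₀ c v₀)
        (-(d⁻¹ • (Df.comp ((ContinuousLinearMap.id ℝ (EuclideanSpace ℝ (Fin 3))).prod (0 : EuclideanSpace ℝ (Fin 3) →L[ℝ] EuclideanSpace ℝ (Fin m)))))) c₀ := by
      have heq : (fun c : EuclideanSpace ℝ (Fin 3) => that θ₀ c v₀)
          = fun c : EuclideanSpace ℝ (Fin 3) => t₀ - d⁻¹ * f (c + t₀ • v₀) θ₀ := by
        funext c
        rw [hthat, div_eq_inv_mul]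
      rw [heq]
      exact (hD2.const_mul d⁻¹).const_sub t₀
    rw [hthatc.fderiv]
    ext dc
    have hk := key dc
    simp only [ContinuousLinearMap.neg_apply, ContinuousLinearMap.smul_apply, smul_eq_mul,
      ContinuousLinearMap.comp_apply, ContinuousLinearMap.prod_apply,
      ContinuousLinearMap.id_apply, ContinuousLinearMap.zero_apply]
    show -(d⁻¹ * Df (dc, 0)) = Tc dc
    field_simp
    linarith
  -- ===== partial in v =====
  · have hdiffv : DifferentiableAt ℝ (fun v : EuclideanSpace ℝ (Fin 3) => t θ₀ c₀ v) v₀ := by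
      have he : DifferentiableAt ℝ (fun v : EuclideanSpace ℝ (Fin 3) => ((θ₀ : EuclideanSpace ℝ (Fin m)), ((c₀ : EuclideanSpace ℝ (Fin 3)), v))) v₀ :=
        (differentiableAt_const _).prodMk ((differentiableAt_const _).prodMk differentiableAt_id)
      have h := ht'.comp v₀ he; exact h
    set Tv : EuclideanSpace ℝ (Fin 3) →L[ℝ] ℝ := fderiv ℝ (fun v : EuclideanSpace ℝ (Fin 3) => t θ₀ c₀ v) v₀ with hTvdef
    have hTv : HasFDerivAt (fun v : EuclideanSpace ℝ (Fin 3) => t θ₀ c₀ v) Tv v₀ := hdiffv.hasFDerivAt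
    have hr : HasFDerivAt (fun v : EuclideanSpace ℝ (Fin 3) => ((c₀ + t θ₀ c₀ v • v : EuclideanSpace ℝ (Fin 3)), (θ₀ : EuclideanSpace ℝ (Fin m))))
        ((t θ₀ c₀ v₀ • ContinuousLinearMap.id ℝ (EuclideanSpace ℝ (Fin 3)) + Tv.smulRight v₀).prod (0 : EuclideanSpace ℝ (Fin 3) →L[ℝ] EuclideanSpace ℝ (Fin m))) v₀ := by
      refine HasFDerivAt.prodMk ?_ (hasFDerivAt_const θ₀ v₀)
      exact (hTv.smul (hasFDerivAt_id v₀)).const_add c₀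
    have hφ : HasFDerivAt (fun v : EuclideanSpace ℝ (Fin 3) => f (c₀ + t θ₀ c₀ v • v) θ₀)
        (Df.comp ((t θ₀ c₀ v₀ • ContinuousLinearMap.id ℝ (EuclideanSpace ℝ (Fin 3)) + Tv.smulRight v₀).prod (0 : EuclideanSpace ℝ (Fin 3) →L[ℝ] EuclideanSpace ℝ (Fin m)))) v₀ := by
      have hDf' : HasFDerivAt F Df ((c₀ + t θ₀ c₀ v₀ • v₀ : EuclideanSpace ℝ (Fin 3)), θ₀) := by rw [← hpt]; exact hDf
      have h : HasFDerivAt (F ∘ (fun v : EuclideanSpace ℝ (Fin 3) => ((c₀ + t θ₀ c₀ v • v : EuclideanSpace ℝ (Fin 3)), θ₀)))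
          (Df.comp ((t θ₀ c₀ v₀ • ContinuousLinearMap.id ℝ (EuclideanSpace ℝ (Fin 3)) + Tv.smulRight v₀).prod (0 : EuclideanSpace ℝ (Fin 3) →L[ℝ] EuclideanSpace ℝ (Fin m)))) v₀ :=
        hDf'.comp v₀ hr
      exact h
    have hev : ∀ᶠ v in nhds v₀, f (c₀ + t θ₀ c₀ v • v) θ₀ = 0 := by
      have hc : Filter.Tendsto (fun v : EuclideanSpace ℝ (Fin 3) => ((θ₀ : EuclideanSpace ℝ (Fin m)), ((c₀ : EuclideanSpace ℝ (Fin 3)), v))) (nhds v₀) (nhds (θ₀, c₀, v₀)) :=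
        (continuous_const.prodMk (continuous_const.prodMk continuous_id)).continuousAt
      exact hc.eventually ht
    have hφ0 : Df.comp ((t θ₀ c₀ v₀ • ContinuousLinearMap.id ℝ (EuclideanSpace ℝ (Fin 3)) + Tv.smulRight v₀).prod (0 : EuclideanSpace ℝ (Fin 3) →L[ℝ] EuclideanSpace ℝ (Fin m))) = 0 := by
      have h1 : (fun v : EuclideanSpace ℝ (Fin 3) => f (c₀ + t θ₀ c₀ v • v) θ₀) =ᶠ[nhds v₀] fun _ => (0 : ℝ) := hev
      have h2 : fderiv ℝ (fun v : EuclideanSpace ℝ (Fin 3) => f (c₀ + t θ₀ c₀ v • v) θ₀) v₀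
          = fderiv ℝ (fun _ : EuclideanSpace ℝ (Fin 3) => (0 : ℝ)) v₀ := h1.fderiv_eq
      rw [hφ.fderiv, fderiv_fun_const] at h2
      simpa using h2
    have key : ∀ dv : EuclideanSpace ℝ (Fin 3), t θ₀ c₀ v₀ * Df (dv, 0) + Tv dv * d = 0 := by
      intro dv
      have := congrFun (congrArg DFunLike.coe hφ0) dv
      simp only [ContinuousLinearMap.comp_apply, ContinuousLinearMap.prod_apply,
        ContinuousLinearMap.smulRight_apply, ContinuousLinearMap.id_apply,
        ContinuousLinearMap.add_apply, ContinuousLinearMap.smul_apply,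
        ContinuousLinearMap.zero_apply] at this
      rw [show (t θ₀ c₀ v₀ • dv + Tv dv • v₀, (0 : EuclideanSpace ℝ (Fin m)))
            = ((t θ₀ c₀ v₀ • dv, (0:EuclideanSpace ℝ (Fin m))) : EuclideanSpace ℝ (Fin 3) × EuclideanSpace ℝ (Fin m)) + (Tv dv • v₀, (0:EuclideanSpace ℝ (Fin m))) by simp,
        map_add, hsmul, hsmul] at this
      rw [hdval]
      linarith
    have hD2 : HasFDerivAt (fun v : EuclideanSpace ℝ (Fin 3) => f (c₀ + t₀ • v) θ₀)
        (Df.comp ((t₀ • ContinuousLinearMap.id ℝ (EuclideanSpace ℝ (Fin 3))).prod (0 : EuclideanSpace ℝ (Fin 3) →L[ℝ] EuclideanSpace ℝ (Fin m)))) v₀ := by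
      have hr2 : HasFDerivAt (fun v : EuclideanSpace ℝ (Fin 3) => ((c₀ + t₀ • v : EuclideanSpace ℝ (Fin 3)), (θ₀ : EuclideanSpace ℝ (Fin m))))
          ((t₀ • ContinuousLinearMap.id ℝ (EuclideanSpace ℝ (Fin 3))).prod (0 : EuclideanSpace ℝ (Fin 3) →L[ℝ] EuclideanSpace ℝ (Fin m))) v₀ := by
        refine HasFDerivAt.prodMk ?_ (hasFDerivAt_const θ₀ v₀)
        exact ((hasFDerivAt_id v₀).const_smul t₀).const_add c₀
      have hDf' : HasFDerivAt F Df ((c₀ + t₀ • v₀ : EuclideanSpace ℝ (Fin 3)), θ₀) := by rw [← hx₀]; exact hDf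
      have h : HasFDerivAt (F ∘ (fun v : EuclideanSpace ℝ (Fin 3) => ((c₀ + t₀ • v : EuclideanSpace ℝ (Fin 3)), θ₀)))
          (Df.comp ((t₀ • ContinuousLinearMap.id ℝ (EuclideanSpace ℝ (Fin 3))).prod (0 : EuclideanSpace ℝ (Fin 3) →L[ℝ] EuclideanSpace ℝ (Fin m)))) v₀ :=
        hDf'.comp v₀ hr2
      exact h
    have hthatv : HasFDerivAt (fun v : EuclideanSpace ℝ (Fin 3) => that θ₀ c₀ v)
        (-(d⁻¹ • (Df.comp ((t₀ • ContinuousLinearMap.id ℝ (EuclideanSpace ℝ (Fin 3))).prod (0 : EuclideanSpace ℝ (Fin 3) →L[ℝ] EuclideanSpace ℝ (Fin m)))))) v₀ := by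
      have heq : (fun v : EuclideanSpace ℝ (Fin 3) => that θ₀ c₀ v)
          = fun v : EuclideanSpace ℝ (Fin 3) => t₀ - d⁻¹ * f (c₀ + t₀ • v) θ₀ := by
        funext v
        rw [hthat, div_eq_inv_mul]
      rw [heq]
      exact (hD2.const_mul d⁻¹).const_sub t₀
    rw [hthatv.fderiv]
    ext dv
    have hk := key dv
    simp only [ContinuousLinearMap.neg_apply, ContinuousLinearMap.smul_apply, smul_eq_mul,
      ContinuousLinearMap.comp_apply, ContinuousLinearMap.prod_apply,
      ContinuousLinearMap.id_apply, ContinuousLinearMap.zero_apply]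
    rw [hsmul]
    show -(d⁻¹ * (t₀ * Df (dv, 0))) = Tv dv
    rw [ht₀]
    field_simp
    linarith
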